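/- Let X be a complete metric space and x ∈ X, and let H_x be a maximal element of the family of factor subsets through x isometric to Hilbert spaces. Then H_x equals the union of all splitting lines of X passing through x (together with {x} if no splitting line passes through x). -/

import Mathlib

/-- `IsL2Prod Φ` means `Φ : X → Y × Z` is a bijection identifying `X` with the
ℓ²-direct product of the metric spaces `Y` and `Z`. -/
def IsL2Prod {X Y Z : Type} [MetricSpace X] [MetricSpace Y] [MetricSpace Z]
    (Φ : X → Y × Z) : Prop :=
  Function.Bijective Φ ∧
    ∀ p q : X, dist p q ^ 2 = dist (Φ p).1 (Φ q).1 ^ 2 + dist (Φ p).2 (Φ q).2 ^ 2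

/-- `A` is a factor subset of `X` through `x`: some ℓ²-product decomposition of `X`
carries `A` onto the fiber of the first factor through `x`. -/
def IsFactorSubset {X : Type} [MetricSpace X] (A : Set X) (x : X) : Prop :=
  x ∈ A ∧ ∃ (Y Z : Type) (_ : MetricSpace Y) (_ : MetricSpace Z) (Φ : X → Y × Z),
    IsL2Prod Φ ∧ A = {p : X | (Φ p).2 = (Φ x).2}

/-- A line in a metric space: a subset isometric to `ℝ`. -/
def IsLine {X : Type} [MetricSpace X] (ℓ : Set X) : Prop :=
  ∃ γ : ℝ → X, Isometry γ ∧ Set.range γ = ℓ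

/-- A splitting line: a line carried onto a fiber `ℝ × {z₀}` by some
ℓ²-product decomposition `X ≅ ℝ × Z`. -/
def IsSplittingLine {X : Type} [MetricSpace X] (ℓ : Set X) : Prop :=
  IsLine ℓ ∧ ∃ (Z : Type) (_ : MetricSpace Z) (Φ : X → ℝ × Z) (z₀ : Z),
    IsL2Prod Φ ∧ Φ '' ℓ = Set.univ ×ˢ {z₀}

/-- `π` is the nearest-point projection onto `A`: every point has `π p` as its
unique nearest point in `A`. -/
def IsNearestPointProj {X : Type} [MetricSpace X] (A : Set X) (π : X → X) : Prop :=
  ∀ p : X, π p ∈ A ∧ (∀ a ∈ A, dist p (π p) ≤ dist p a) ∧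
    ∀ a ∈ A, dist p a = dist p (π p) → a = π p

/-- The subset `A`, with the induced metric, is isometric to a real Hilbert space. -/
def IsHilbertSubset {X : Type} [MetricSpace X] (A : Set X) : Prop :=
  ∃ (H : Type) (_ : NormedAddCommGroup H) (_ : InnerProductSpace ℝ H) (_ : CompleteSpace H)
    (f : A → H), Isometry f ∧ Function.Surjective f


open scoped RealInnerProductSpace

lemma sq_eq_of_sq_eq_sq {a b : ℝ} (ha : 0 ≤ a) (hb : 0 ≤ b) (h : a ^ 2 = b ^ 2) : a = b := by
  nlinarith

lemma l2dist_sq {α β : Type} [MetricSpace α] [MetricSpace β] (x y : WithLp 2 (α × β)) :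
    dist x y ^ 2 = dist x.fst y.fst ^ 2 + dist x.snd y.snd ^ 2 := by
  have h := WithLp.prod_dist_eq_add (p := 2) (α := α) (β := β) (by norm_num) x y
  simp only [ENNReal.toReal_ofNat] at h
  rw [h, ← Real.rpow_natCast _ 2]
  rw [← Real.rpow_mul (by positivity)]
  norm_num

lemma line_subset_core {X : Type} [MetricSpace X] {x : X} {Hx ℓ : Set X}
    {H : Type} [NormedAddCommGroup H] [InnerProductSpace ℝ H] [CompleteSpace H]
    {Z : Type} [MetricSpace Z] {W : Type} [MetricSpace W]
    (h : X → H) (z : X → Z) (τ : H → X → X)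
    (β : X → ℝ) (w : X → W) (σ : ℝ → X → X)
    (P1 : ∀ p q, dist p q ^ 2 = ‖h p - h q‖ ^ 2 + dist (z p) (z q) ^ 2)
    (P2 : ∀ u p, h (τ u p) = h p + u) (P3 : ∀ u p, z (τ u p) = z p)
    (P4 : ∀ u v p, τ u (τ v p) = τ (u + v) p) (P6 : ∀ p, τ 0 p = p)
    (P5 : h x = 0) (P7 : Hx = {p | z p = z x})
    (P8 : ∀ p q, h p = h q → z p = z q → p = q)
    (Q1 : ∀ p q, dist p q ^ 2 = (β p - β q) ^ 2 + dist (w p) (w q) ^ 2)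
    (Q2 : ∀ t p, β (σ t p) = β p + t) (Q3 : ∀ t p, w (σ t p) = w p)
    (Q4 : ∀ t t' p, σ t (σ t' p) = σ (t + t') p) (Q6 : ∀ p, σ 0 p = p)
    (Q5 : β x = 0) (Qline : ℓ = Set.range fun t => σ t x)
    (hmax : ∀ B : Set X, IsFactorSubset B x → IsHilbertSubset B → Hx ⊆ B → B = Hx) :
    ℓ ⊆ Hx := by
  -- basic distance expansions
  have R1 : ∀ t p q, dist (σ t p) q ^ 2 = dist p q ^ 2 + 2*t*(β p - β q) + t^2 := by
    intro t p q
    rw [Q1 (σ t p) q, Q2, Q3, Q1 p q]; ring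
  have R2 : ∀ u p q, dist (τ u p) q ^ 2 = dist p q ^ 2 + 2*(⟪h p - h q, u⟫) + ‖u‖^2 := by
    intro u p q
    rw [P1 (τ u p) q, P2, P3, P1 p q, show h p + u - h q = (h p - h q) + u by abel,
      norm_add_sq_real]
    ring
  have R3 : ∀ p u, 2*(⟪h p, u⟫) = dist p x ^ 2 - dist p (τ u x) ^ 2 + ‖u‖^2 := by
    intro p u
    have e1 := P1 p (τ u x)
    rw [P2, P3, P5, zero_add] at e1
    have e2 := P1 p x
    rw [P5, sub_zero] at e2
    rw [e1, e2, norm_sub_sq_real]; ring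
  have R4 : ∀ p, 2 * β p = dist p x ^ 2 - dist p (σ 1 x) ^ 2 + 1 := by
    intro p
    have e1 := Q1 p (σ 1 x)
    rw [Q2, Q3, Q5, zero_add] at e1
    have e2 := Q1 p x
    rw [Q5, sub_zero] at e2
    rw [e1, e2]; ring
  set c : H := h (σ 1 x) with hc
  have R5 : ∀ u p, β (τ u p) = β p + (⟪c, u⟫) := by
    intro u p
    have e := R4 (τ u p)
    rw [R2 u p x, R2 u p (σ 1 x), P5, sub_zero, ← hc] at e
    have e2 := R4 p
    rw [inner_sub_left] at e
    linarith
  have R6 : ∀ t p u, (⟪h (σ t p), u⟫) = (⟪h p, u⟫) + t * (⟪c, u⟫) := by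
    intro t p u
    have e := R3 (σ t p) u
    rw [R1 t p x, R1 t p (τ u x)] at e
    have e2 := R3 p u
    have e3 : β (τ u x) = (⟪c, u⟫) := by rw [R5, Q5, zero_add]
    rw [e3, Q5] at e
    linarith
  have R7 : ∀ t p, h (σ t p) = h p + t • c := by
    intro t p
    have key : ∀ u, (⟪h (σ t p) - (h p + t • c), u⟫) = 0 := by
      intro u
      rw [inner_sub_left, inner_add_left, real_inner_smul_left, R6]; ring
    have := key (h (σ t p) - (h p + t • c))
    rw [inner_self_eq_zero] at this
    exact sub_eq_zero.mp this
  have Sσ : ∀ t p q, dist (σ t p) (σ t q) = dist p q := by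
    intro t p q
    refine sq_eq_of_sq_eq_sq dist_nonneg dist_nonneg ?_
    rw [Q1 (σ t p) (σ t q), Q2, Q2, Q3, Q3, Q1 p q]; ring
  have Sτ : ∀ u p q, dist (τ u p) (τ u q) = dist p q := by
    intro u p q
    refine sq_eq_of_sq_eq_sq dist_nonneg dist_nonneg ?_
    rw [P1 (τ u p) (τ u q), P2, P2, P3, P3, P1 p q, show h p + u - (h q + u) = h p - h q by abel]
  have R8 : ‖c‖^2 ≤ 1 := by
    have d1 : dist (σ 1 x) x ^ 2 = 1 := by
      rw [R1 1 x x, dist_self]; ring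
    have e := P1 (σ 1 x) x
    rw [P5, sub_zero, ← hc, d1] at e
    have := sq_nonneg (dist (z (σ 1 x)) (z x))
    linarith
  have R9 : ∀ t u p, τ u (σ t p) = σ t (τ u p) := by
    intro t u p
    apply P8
    · rw [P2, R7, R7, P2]; abel
    · rw [P3]
      have e2 := P1 (τ u p) p
      rw [P2, P3, dist_self] at e2
      have e1 := P1 (σ t (τ u p)) (σ t p)
      rw [Sσ t (τ u p) p, e2, R7, R7, P2,
        show h p + u + t • c - (h p + t • c) = h p + u - h p by abel] at e1
      have h0 : dist (z (σ t (τ u p))) (z (σ t p)) ^ 2 = 0 := by linarith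
      have h0' := pow_eq_zero_iff (n := 2) (by norm_num) |>.mp h0
      exact (dist_eq_zero.mp h0').symm
  rcases eq_or_lt_of_le R8 with hc1 | hc2
  · -- case ‖c‖² = 1 : the line is inside Hx already
    rw [Qline, P7]
    rintro _ ⟨t, rfl⟩
    show z (σ t x) = z x
    have d1 : dist (σ t x) x ^ 2 = t ^ 2 := by
      rw [R1 t x x, dist_self]; ring
    have e := P1 (σ t x) x
    rw [P5, sub_zero, R7, P5, zero_add, d1] at e
    have hn : ‖t • c‖ ^ 2 = t ^ 2 := by
      rw [norm_smul, mul_pow, Real.norm_eq_abs, sq_abs, hc1, mul_one]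
    rw [hn] at e
    have h0 : dist (z (σ t x)) (z x) ^ 2 = 0 := by linarith
    exact dist_eq_zero.mp (pow_eq_zero_iff (n := 2) (by norm_num) |>.mp h0)
  · -- case ‖c‖² < 1 : build a strictly bigger Hilbert factor subset
    set s : ℝ := Real.sqrt (1 - ‖c‖ ^ 2) with hs
    have hs2 : s ^ 2 = 1 - ‖c‖ ^ 2 := Real.sq_sqrt (by linarith)
    have hspos : 0 < s := Real.sqrt_pos.mpr (by linarith)
    set r : X → ℝ := fun p => (β p - (⟪c, h p⟫)) / s with hr
    have T1 : r x = 0 := by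
      simp only [hr, P5, Q5, inner_zero_right, sub_zero, zero_div, zero_sub, neg_zero]
    have T2 : ∀ u p, r (τ u p) = r p := by
      intro u p
      simp only [hr, R5, P2, inner_add_right]
      ring
    have T3 : ∀ t p, r (σ t p) = r p + t * s := by
      intro t p
      simp only [hr, Q2, R7, inner_add_right, real_inner_smul_right,
        real_inner_self_eq_norm_sq]
      have key : β p + t - ((⟪c, h p⟫) + t * ‖c‖ ^ 2) = (β p - (⟪c, h p⟫)) + t * s * s := by
        linear_combination (-t) * hs2
      rw [key, add_div, mul_div_assoc, div_self (ne_of_gt hspos), mul_one]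
    have Tβ : ∀ p, β p = s * r p + (⟪c, h p⟫) := by
      intro p
      simp only [hr]
      field_simp
      ring
    set Pr : X → X := fun p => τ (-(h p - (r p / s) • c)) (σ (-(r p / s)) p) with hPr
    have T4 : ∀ p, h (Pr p) = 0 := by
      intro p
      simp only [hPr, P2, R7, neg_smul]
      abel
    have T5 : ∀ p, r (Pr p) = 0 := by
      intro p
      simp only [hPr, T2, T3]
      field_simp
      ring
    have T7 : ∀ p, σ (r p / s) (τ (h p - (r p / s) • c) (Pr p)) = p := by
      intro p
      simp only [hPr, P4]
      rw [show h p - (r p / s) • c + -(h p - (r p / s) • c) = 0 by abel, P6, Q4]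
      rw [show r p / s + -(r p / s) = 0 by ring, Q6]
    have T10 : ∀ f, h f = 0 → r f = 0 → ∀ t u, Pr (σ t (τ u f)) = f := by
      intro f hf rf t u
      have hh : h (σ t (τ u f)) = u + t • c := by rw [R7, P2, hf, zero_add]
      have hrr : r (σ t (τ u f)) = t * s := by rw [T3, T2, rf, zero_add]
      have hts : r (σ t (τ u f)) / s = t := by rw [hrr]; field_simp
      simp only [hPr, hts, hh]
      rw [show u + t • c - t • c = u by abel, Q4,
        show -t + t = 0 by ring, Q6, P4, show -u + u = 0 by abel, P6]
    have T8 : ∀ f₁ f₂, h f₁ = 0 → r f₁ = 0 → h f₂ = 0 → r f₂ = 0 → ∀ t u,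
        dist f₁ (σ t (τ u f₂)) ^ 2 = ‖u + t • c‖ ^ 2 + t ^ 2 * s ^ 2 + dist f₁ f₂ ^ 2 := by
      intro f₁ f₂ h1 r1 h2 r2 t u
      have b1 : β f₁ = 0 := by rw [Tβ, h1, r1, inner_zero_right]; ring
      have b2 : β f₂ = 0 := by rw [Tβ, h2, r2, inner_zero_right]; ring
      have a1 : dist f₁ f₂ ^ 2 = dist (w f₁) (w f₂) ^ 2 := by
        rw [Q1 f₁ f₂, b1, b2]; ring
      have a2 : dist f₁ f₂ ^ 2 = dist (z f₁) (z f₂) ^ 2 := by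
        rw [P1 f₁ f₂, h1, h2, sub_zero, norm_zero]; ring
      have bb : dist f₁ (σ t f₂) ^ 2 = t ^ 2 + dist (w f₁) (w f₂) ^ 2 := by
        rw [Q1 f₁ (σ t f₂), Q2, Q3, b1, b2]; ring
      have bb' : dist f₁ (σ t f₂) ^ 2 = t ^ 2 * ‖c‖ ^ 2 + dist (z f₁) (z (σ t f₂)) ^ 2 := by
        rw [P1 f₁ (σ t f₂), R7, h1, h2, zero_add, zero_sub, norm_neg, norm_smul, mul_pow,
          Real.norm_eq_abs, sq_abs]
      have dzz : dist (z f₁) (z (σ t f₂)) ^ 2 = t ^ 2 * s ^ 2 + dist f₁ f₂ ^ 2 := by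
        rw [hs2]
        nlinarith [bb, bb', a1, a2]
      have hz : z (σ t (τ u f₂)) = z (σ t f₂) := by rw [← R9, P3]
      have hh : h (σ t (τ u f₂)) = u + t • c := by rw [R7, P2, h2, zero_add]
      rw [P1 f₁ (σ t (τ u f₂)), hh, hz, h1, zero_sub, norm_neg, dzz]
      ring
    have T9 : ∀ p q, dist p q ^ 2
        = ‖h p - h q‖ ^ 2 + (r p - r q) ^ 2 + dist (Pr p) (Pr q) ^ 2 := by
      intro p q
      have stepA : σ (-(r p / s) + r q / s) (τ (-(h p - (r p / s) • c) + (h q - (r q / s) • c)) (Pr q))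
          = τ (-(h p - (r p / s) • c)) (σ (-(r p / s)) q) := by
        conv_rhs => rw [← T7 q, Q4, R9, P4]
      have stepB : dist p q = dist (Pr p)
          (σ (-(r p / s) + r q / s) (τ (-(h p - (r p / s) • c) + (h q - (r q / s) • c)) (Pr q))) := by
        rw [stepA]
        show dist p q = dist (τ (-(h p - (r p / s) • c)) (σ (-(r p / s)) p))
          (τ (-(h p - (r p / s) • c)) (σ (-(r p / s)) q))
        rw [Sτ, Sσ]
      have stepC := T8 (Pr p) (Pr q) (T4 p) (T5 p) (T4 q) (T5 q)
        (-(r p / s) + r q / s) (-(h p - (r p / s) • c) + (h q - (r q / s) • c))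
      have stepD : (-(h p - (r p / s) • c) + (h q - (r q / s) • c)) + (-(r p / s) + r q / s) • c
          = h q - h p := by
        rw [add_smul, neg_smul]; abel
      have stepE : (-(r p / s) + r q / s) ^ 2 * s ^ 2 = (r p - r q) ^ 2 := by
        field_simp
        ring
      rw [stepB, stepC, stepD, stepE, norm_sub_rev]
    -- the bigger factor subset
    set B : Set X := {p | Pr p = x} with hB
    have U1 : Pr x = x := by
      simp only [hPr, P5, T1, zero_div, zero_smul, sub_zero, neg_zero, Q6, P6]
    have U2 : Hx ⊆ B := by
      intro a ha
      have hza : z a = z x := by rw [P7] at ha; exact ha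
      have haeq : a = τ (h a) x := P8 a (τ (h a) x) (by rw [P2, P5, zero_add]) (by rw [P3]; exact hza)
      have hra : r a = 0 := by rw [haeq, T2, T1]
      show Pr a = x
      simp only [hPr, hra, zero_div, zero_smul, sub_zero, neg_zero, Q6]
      conv_lhs => rw [haeq]
      rw [P2, P5, zero_add, P4, show -(h a) + h a = 0 by abel, P6]
    have U3 : ℓ ⊆ B := by
      rw [Qline]
      rintro _ ⟨t, rfl⟩
      show Pr (σ t x) = x
      have e : σ t x = σ t (τ 0 x) := by rw [P6]
      rw [e, T10 x P5 T1 t 0]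
    have hfst : ∀ (a : H) (b : ℝ), ((WithLp.equiv 2 (H × ℝ)).symm (a, b)).fst = a :=
      fun a b => rfl
    have hsnd : ∀ (a : H) (b : ℝ), ((WithLp.equiv 2 (H × ℝ)).symm (a, b)).snd = b :=
      fun a b => rfl
    have memB_iff : ∀ p, p ∈ B ↔ Pr p = x := fun p => Iff.rfl
    have hcoord : ∀ p q : X, dist ((WithLp.equiv 2 (H × ℝ)).symm (h p, r p))
        ((WithLp.equiv 2 (H × ℝ)).symm (h q, r q)) ^ 2 = ‖h p - h q‖ ^ 2 + (r p - r q) ^ 2 := by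
      intro p q
      rw [l2dist_sq, hfst, hfst, hsnd, hsnd, dist_eq_norm, Real.dist_eq, sq_abs]
    have U4 : IsHilbertSubset B := by
      refine ⟨WithLp 2 (H × ℝ), inferInstance, inferInstance, inferInstance,
        fun b => (WithLp.equiv 2 (H × ℝ)).symm (h (b : X), r (b : X)), ?_, ?_⟩
      · apply Isometry.of_dist_eq
        intro b b'
        apply sq_eq_of_sq_eq_sq dist_nonneg dist_nonneg
        rw [hcoord, Subtype.dist_eq, T9 (b : X) (b' : X), b.2, b'.2, dist_self]
        ring
      · intro y
        set b : X := σ (y.snd / s) (τ (y.fst - (y.snd / s) • c) x) with hb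
        have hbB : b ∈ B := T10 x P5 T1 _ _
        have hhb : h b = y.fst := by
          rw [hb, R7, P2, P5, zero_add, sub_add_cancel]
        have hrb : r b = y.snd := by
          rw [hb, T3, T2, T1, zero_add, div_mul_cancel₀ _ (ne_of_gt hspos)]
        refine ⟨⟨b, hbB⟩, ?_⟩
        show (WithLp.equiv 2 (H × ℝ)).symm (h b, r b) = y
        rw [hhb, hrb]
        have : (y.fst, y.snd) = WithLp.equiv 2 (H × ℝ) y :=
          Prod.ext rfl rfl
        rw [this, Equiv.symm_apply_apply]
    have U5 : IsFactorSubset B x := by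
      refine ⟨U1, WithLp 2 (H × ℝ), {p : X // h p = 0 ∧ r p = 0}, inferInstance, inferInstance,
        fun p => ((WithLp.equiv 2 (H × ℝ)).symm (h p, r p), ⟨Pr p, T4 p, T5 p⟩), ⟨⟨?_, ?_⟩, ?_⟩, ?_⟩
      · -- injective
        intro p q hpq
        have h1 : (WithLp.equiv 2 (H × ℝ)).symm (h p, r p)
            = (WithLp.equiv 2 (H × ℝ)).symm (h q, r q) := congrArg Prod.fst hpq
        have h2 : (h p, r p) = (h q, r q) := (WithLp.equiv 2 (H × ℝ)).symm.injective h1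
        have hhh : h p = h q := congrArg Prod.fst h2
        have hrr : r p = r q := congrArg Prod.snd h2
        have hPP : Pr p = Pr q := congrArg (fun v => (Prod.snd v : {p : X // h p = 0 ∧ r p = 0}).val) hpq
        conv_lhs => rw [← T7 p]
        conv_rhs => rw [← T7 q]
        rw [hhh, hrr, hPP]
      · -- surjective
        rintro ⟨y, g, hg0, hg1⟩
        set p : X := σ (y.snd / s) (τ (y.fst - (y.snd / s) • c) g) with hp
        have hhp : h p = y.fst := by
          rw [hp, R7, P2, hg0, zero_add, sub_add_cancel]
        have hrp : r p = y.snd := by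
          rw [hp, T3, T2, hg1, zero_add, div_mul_cancel₀ _ (ne_of_gt hspos)]
        have hPrp : Pr p = g := T10 g hg0 hg1 _ _
        refine ⟨p, Prod.ext ?_ (Subtype.ext hPrp)⟩
        show (WithLp.equiv 2 (H × ℝ)).symm (h p, r p) = y
        rw [hhp, hrp]
        have : (y.fst, y.snd) = WithLp.equiv 2 (H × ℝ) y :=
          Prod.ext rfl rfl
        rw [this, Equiv.symm_apply_apply]
      · -- the ℓ² identity
        intro p q
        show dist p q ^ 2 = dist ((WithLp.equiv 2 (H × ℝ)).symm (h p, r p))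
            ((WithLp.equiv 2 (H × ℝ)).symm (h q, r q)) ^ 2
          + dist (⟨Pr p, T4 p, T5 p⟩ : {p : X // h p = 0 ∧ r p = 0})
              (⟨Pr q, T4 q, T5 q⟩ : {p : X // h p = 0 ∧ r p = 0}) ^ 2
        rw [hcoord, Subtype.dist_eq, T9 p q]
      · -- B is the fiber through x
        ext p
        show Pr p = x ↔ _
        show Pr p = x ↔ (⟨Pr p, T4 p, T5 p⟩ : {p : X // h p = 0 ∧ r p = 0}) = ⟨Pr x, T4 x, T5 x⟩
        rw [Subtype.mk.injEq, U1]
    have hBeq : B = Hx := hmax B U5 U4 U2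
    rw [← hBeq]
    exact U3

lemma factor_pack {X : Type} [MetricSpace X] {x : X} {A : Set X}
    (hfac : IsFactorSubset A x) (hHilb : IsHilbertSubset A) :
    ∃ (H : Type) (_i1 : NormedAddCommGroup H) (_i2 : InnerProductSpace ℝ H)
      (_i3 : CompleteSpace H) (Z : Type) (_i4 : MetricSpace Z)
      (h : X → H) (z : X → Z) (τ : H → X → X),
      (∀ p q, dist p q ^ 2 = ‖h p - h q‖ ^ 2 + dist (z p) (z q) ^ 2) ∧
      (∀ u p, h (τ u p) = h p + u) ∧ (∀ u p, z (τ u p) = z p) ∧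
      (∀ u v p, τ u (τ v p) = τ (u + v) p) ∧ (∀ p, τ 0 p = p) ∧
      h x = 0 ∧ A = {p | z p = z x} ∧
      (∀ p q, h p = h q → z p = z q → p = q) ∧
      (∀ (a : H) (ζ : Z), ∃ p, h p = a ∧ z p = ζ) := by
  obtain ⟨hxA, Y, Z, iY, iZ, Φ, ⟨hbij, hdist⟩, hset⟩ := hfac
  obtain ⟨H, i1, i2, i3, f, hf_iso, hf_surj⟩ := hHilb
  refine ⟨H, i1, i2, i3, Z, iZ, ?_⟩
  set Φe : X ≃ Y × Z := Equiv.ofBijective Φ hbij with hΦe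
  have hΦe_app : ∀ p, Φe p = Φ p := fun p => rfl
  have happ_symm : ∀ a, Φ (Φe.symm a) = a := fun a => Φe.apply_symm_apply a
  have hsymm_app : ∀ p, Φe.symm (Φ p) = p := fun p => Φe.symm_apply_apply p
  set zx : Z := (Φ x).2 with hzx
  have emem : ∀ y : Y, Φe.symm (y, zx) ∈ A := by
    intro y
    rw [hset]
    show (Φ (Φe.symm (y, zx))).2 = (Φ x).2
    rw [happ_symm]
  set e : Y → A := fun y => ⟨Φe.symm (y, zx), emem y⟩ with he
  set G : Y → H := fun y => f (e y) - f ⟨x, hxA⟩ with hG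
  have hdist_e : ∀ y y' : Y, dist (e y : X) (e y' : X) = dist y y' := by
    intro y y'
    have h1 := hdist (Φe.symm (y, zx)) (Φe.symm (y', zx))
    rw [happ_symm, happ_symm] at h1
    simp only [dist_self] at h1
    refine sq_eq_of_sq_eq_sq dist_nonneg dist_nonneg ?_
    simpa using h1
  have hGdist : ∀ y y', ‖G y - G y'‖ = dist y y' := by
    intro y y'
    have : G y - G y' = f (e y) - f (e y') := by simp [hG]
    rw [this, ← dist_eq_norm, hf_iso.dist_eq, Subtype.dist_eq, hdist_e]
  have hGinj : Function.Injective G := by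
    intro y y' hyy
    have := hGdist y y'
    rw [hyy, sub_self, norm_zero] at this
    exact dist_eq_zero.mp this.symm
  have hGsurj : Function.Surjective G := by
    intro a
    obtain ⟨b, hb⟩ := hf_surj (a + f ⟨x, hxA⟩)
    refine ⟨(Φ (b : X)).1, ?_⟩
    have hb2 : (Φ (b : X)).2 = zx := (Set.ext_iff.mp hset (b : X)).mp b.2
    have heb : e (Φ (b : X)).1 = b := by
      apply Subtype.ext
      show Φe.symm ((Φ (b : X)).1, zx) = (b : X)
      rw [← hb2]
      exact hsymm_app (b : X)
    rw [hG]
    simp only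
    rw [heb, hb]
    abel
  set Ge : Y ≃ H := Equiv.ofBijective G ⟨hGinj, hGsurj⟩ with hGe
  have hGapp_symm : ∀ a, G (Ge.symm a) = a := fun a => Ge.apply_symm_apply a
  have hGsymm_app : ∀ y, Ge.symm (G y) = y := fun y => Ge.symm_apply_apply y
  refine ⟨fun p => G (Φ p).1, fun p => (Φ p).2,
    fun u p => Φe.symm (Ge.symm (G (Φ p).1 + u), (Φ p).2), ?_, ?_, ?_, ?_, ?_, ?_, ?_, ?_, ?_⟩
  · intro p q
    rw [hdist p q, ← hGdist]
  · intro u p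
    simp only [happ_symm, hGapp_symm]
  · intro u p
    simp only [happ_symm]
  · intro u v p
    simp only [happ_symm, hGapp_symm]
    rw [add_assoc, add_comm v u]
  · intro p
    simp only [add_zero, hGsymm_app]
    exact hsymm_app p
  · show G (Φ x).1 = 0
    have : e (Φ x).1 = ⟨x, hxA⟩ := by
      apply Subtype.ext
      show Φe.symm ((Φ x).1, zx) = x
      rw [hzx]
      exact hsymm_app x
    rw [hG]
    simp only
    rw [this, sub_self]
  · exact hset
  · intro p q h1 h2
    have : Φ p = Φ q := Prod.ext (hGinj h1) h2
    exact hbij.1 this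
  · intro a ζ
    exact ⟨Φe.symm (Ge.symm a, ζ), by simp [happ_symm, hGapp_symm]⟩

lemma line_pack {X : Type} [MetricSpace X] {x : X} {ℓ : Set X}
    (hsl : IsSplittingLine ℓ) (hxl : x ∈ ℓ) :
    ∃ (W : Type) (_i : MetricSpace W) (β : X → ℝ) (w : X → W) (σ : ℝ → X → X),
      (∀ p q, dist p q ^ 2 = (β p - β q) ^ 2 + dist (w p) (w q) ^ 2) ∧
      (∀ t p, β (σ t p) = β p + t) ∧ (∀ t p, w (σ t p) = w p) ∧
      (∀ t t' p, σ t (σ t' p) = σ (t + t') p) ∧ (∀ p, σ 0 p = p) ∧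
      β x = 0 ∧ ℓ = Set.range (fun t => σ t x) := by
  obtain ⟨-, W, iW, Ψ, w₀, ⟨hbij, hdist⟩, himg⟩ := hsl
  set Ψe : X ≃ ℝ × W := Equiv.ofBijective Ψ hbij with hΨe
  have happ_symm : ∀ a, Ψ (Ψe.symm a) = a := fun a => Ψe.apply_symm_apply a
  have hsymm_app : ∀ p, Ψe.symm (Ψ p) = p := fun p => Ψe.symm_apply_apply p
  have hwx : (Ψ x).2 = w₀ := by
    have : Ψ x ∈ Ψ '' ℓ := Set.mem_image_of_mem Ψ hxl
    rw [himg] at this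
    exact this.2
  refine ⟨W, iW, fun p => (Ψ p).1 - (Ψ x).1, fun p => (Ψ p).2,
    fun t p => Ψe.symm ((Ψ p).1 + t, (Ψ p).2), ?_, ?_, ?_, ?_, ?_, ?_, ?_⟩
  · intro p q
    rw [hdist p q, Real.dist_eq, sq_abs]
    ring_nf
  · intro t p
    simp only [happ_symm]
    ring
  · intro t p
    simp only [happ_symm]
  · intro t t' p
    simp only [happ_symm]
    rw [add_assoc, add_comm t' t]
  · intro p
    simp only [add_zero]
    exact hsymm_app p
  · ring
  · ext q
    constructor
    · intro hq
      have h2 : (Ψ q).2 = w₀ := by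
        have : Ψ q ∈ Ψ '' ℓ := Set.mem_image_of_mem Ψ hq
        rw [himg] at this
        exact this.2
      refine ⟨(Ψ q).1 - (Ψ x).1, ?_⟩
      show Ψe.symm ((Ψ x).1 + ((Ψ q).1 - (Ψ x).1), (Ψ x).2) = q
      rw [show (Ψ x).1 + ((Ψ q).1 - (Ψ x).1) = (Ψ q).1 by ring, hwx, ← h2]
      exact hsymm_app q
    · rintro ⟨t, rfl⟩
      have : Ψ (Ψe.symm ((Ψ x).1 + t, (Ψ x).2)) ∈ Set.univ ×ˢ ({w₀} : Set W) := by
        rw [happ_symm]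
        exact ⟨Set.mem_univ _, hwx⟩
      rw [← himg] at this
      obtain ⟨q, hqℓ, hq⟩ := this
      have : q = Ψe.symm ((Ψ x).1 + t, (Ψ x).2) := hbij.1 (by rw [hq, happ_symm])
      rwa [this] at hqℓ

lemma mem_splitting_line_core {X : Type} [MetricSpace X] {x p : X} {Hx : Set X}
    {H : Type} [NormedAddCommGroup H] [InnerProductSpace ℝ H] [CompleteSpace H]
    {Z : Type} [MetricSpace Z]
    (h : X → H) (z : X → Z) (τ : H → X → X)
    (P1 : ∀ p q, dist p q ^ 2 = ‖h p - h q‖ ^ 2 + dist (z p) (z q) ^ 2)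
    (P2 : ∀ u p, h (τ u p) = h p + u) (P3 : ∀ u p, z (τ u p) = z p)
    (P6 : ∀ p, τ 0 p = p)
    (P5 : h x = 0) (P7 : Hx = {p | z p = z x})
    (P8 : ∀ p q, h p = h q → z p = z q → p = q)
    (P9 : ∀ (a : H) (ζ : Z), ∃ q, h q = a ∧ z q = ζ)
    (hp : p ∈ Hx) (hne : p ≠ x) :
    ∃ ℓ : Set X, IsSplittingLine ℓ ∧ x ∈ ℓ ∧ p ∈ ℓ := by
  have hzp : z p = z x := by rw [P7] at hp; exact hp
  have hhp : h p ≠ 0 := by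
    intro h0
    exact hne (P8 p x (by rw [h0, P5]) hzp)
  have hnorm : ‖h p‖ ≠ 0 := norm_ne_zero_iff.mpr hhp
  set v : H := ‖h p‖⁻¹ • h p with hv
  have hv1 : ‖v‖ = 1 := by
    rw [hv, norm_smul, norm_inv, norm_norm, inv_mul_cancel₀ hnorm]
  have hvv : (⟪v, v⟫) = 1 := by
    rw [real_inner_self_eq_norm_sq, hv1, one_pow]
  have horth : ∀ a : H, (⟪a - (⟪a, v⟫) • v, v⟫) = 0 := by
    intro a
    rw [inner_sub_left, real_inner_smul_left, hvv, mul_one, sub_self]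
  have hnormid : ∀ a : H, ‖a‖ ^ 2 = (⟪a, v⟫) ^ 2 + ‖a - (⟪a, v⟫) • v‖ ^ 2 := by
    intro a
    have e1 : ‖a - (⟪a, v⟫) • v‖ ^ 2
        = ‖a‖ ^ 2 - 2 * ((⟪a, v⟫) * (⟪a, v⟫)) + (⟪a, v⟫) ^ 2 := by
      rw [norm_sub_sq_real, real_inner_smul_right, norm_smul, Real.norm_eq_abs, mul_pow, sq_abs,
        hv1, one_pow, mul_one]
    nlinarith [e1]
  set E := {e : H // (⟪e, v⟫) = 0} with hE
  set γ : ℝ → X := fun t => τ (t • v) x with hγ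
  have hγh : ∀ t, h (γ t) = t • v := by
    intro t
    rw [hγ]
    simp only [P2, P5, zero_add]
  have hγz : ∀ t, z (γ t) = z x := by
    intro t
    rw [hγ]
    simp only [P3]
  set Φ₂ : X → ℝ × WithLp 2 (E × Z) := fun q =>
    ((⟪h q, v⟫), (WithLp.equiv 2 (E × Z)).symm (⟨h q - (⟪h q, v⟫) • v, horth (h q)⟩, z q)) with hΦ₂
  have hfst : ∀ (a : E) (b : Z), ((WithLp.equiv 2 (E × Z)).symm (a, b)).fst = a :=
    fun a b => rfl
  have hsnd : ∀ (a : E) (b : Z), ((WithLp.equiv 2 (E × Z)).symm (a, b)).snd = b :=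
    fun a b => rfl
  have hl2 : IsL2Prod Φ₂ := by
    constructor
    · constructor
      · intro q q' he
        have h1 : (⟪h q, v⟫) = (⟪h q', v⟫) := congrArg Prod.fst he
        have h2 := (WithLp.equiv 2 (E × Z)).symm.injective (congrArg Prod.snd he)
        have h3 : h q - (⟪h q, v⟫) • v = h q' - (⟪h q', v⟫) • v :=
          Subtype.ext_iff.mp (congrArg Prod.fst h2)
        have h4 : z q = z q' := congrArg Prod.snd h2
        refine P8 q q' ?_ h4
        have := h3
        rw [h1] at this
        have : h q - (⟪h q', v⟫) • v + (⟪h q', v⟫) • v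
            = h q' - (⟪h q', v⟫) • v + (⟪h q', v⟫) • v := by rw [this]
        simpa using this
      · rintro ⟨t, yz⟩
        set e := WithLp.equiv 2 (E × Z) yz with he
        obtain ⟨q, hq1, hq2⟩ := P9 ((e.1 : H) + t • v) e.2
        have hqv : (⟪h q, v⟫) = t := by
          rw [hq1, inner_add_left, real_inner_smul_left, hvv, mul_one, e.1.2, zero_add]
        refine ⟨q, Prod.ext hqv ?_⟩
        show (WithLp.equiv 2 (E × Z)).symm (⟨h q - (⟪h q, v⟫) • v, horth (h q)⟩, z q) = yz
        rw [Equiv.symm_apply_eq, ← he]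
        refine Prod.ext (Subtype.ext ?_) hq2
        show h q - (⟪h q, v⟫) • v = (e.1 : H)
        rw [hqv, hq1]
        abel
    · intro q q'
      rw [P1 q q']
      show _ = dist (⟪h q, v⟫) (⟪h q', v⟫) ^ 2
        + dist ((WithLp.equiv 2 (E × Z)).symm (⟨h q - (⟪h q, v⟫) • v, _⟩, z q))
            ((WithLp.equiv 2 (E × Z)).symm (⟨h q' - (⟪h q', v⟫) • v, _⟩, z q')) ^ 2
      rw [l2dist_sq, hfst, hfst, hsnd, hsnd, Subtype.dist_eq]
      show ‖h q - h q'‖ ^ 2 + dist (z q) (z q') ^ 2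
        = dist (⟪h q, v⟫) (⟪h q', v⟫) ^ 2
          + ((dist (h q - (⟪h q, v⟫) • v) (h q' - (⟪h q', v⟫) • v)) ^ 2 + dist (z q) (z q') ^ 2)
      rw [Real.dist_eq, sq_abs, dist_eq_norm]
      have hid := hnormid (h q - h q')
      rw [inner_sub_left] at hid
      have harr : h q - (⟪h q, v⟫) • v - (h q' - (⟪h q', v⟫) • v)
          = h q - h q' - ((⟪h q, v⟫) - (⟪h q', v⟫)) • v := by
        rw [sub_smul]; abel
      rw [harr]
      linarith [hid]
  set z₀ : WithLp 2 (E × Z) :=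
    (WithLp.equiv 2 (E × Z)).symm (⟨0, by rw [inner_zero_left]⟩, z x) with hz₀
  have hΦγ : ∀ t, Φ₂ (γ t) = (t, z₀) := by
    intro t
    refine Prod.ext ?_ ?_
    · show (⟪h (γ t), v⟫) = t
      rw [hγh, real_inner_smul_left, hvv, mul_one]
    · show (WithLp.equiv 2 (E × Z)).symm (⟨h (γ t) - (⟪h (γ t), v⟫) • v, horth (h (γ t))⟩, z (γ t)) = z₀
      rw [hz₀]
      apply congrArg
      refine Prod.ext (Subtype.ext ?_) (hγz t)
      show h (γ t) - (⟪h (γ t), v⟫) • v = (0 : H)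
      rw [hγh, real_inner_smul_left, hvv, mul_one, sub_self]
  refine ⟨Set.range γ, ⟨⟨γ, ?_, rfl⟩, WithLp 2 (E × Z), inferInstance, Φ₂, z₀, hl2, ?_⟩, ?_, ?_⟩
  · -- γ is an isometry
    apply Isometry.of_dist_eq
    intro t t'
    apply sq_eq_of_sq_eq_sq dist_nonneg dist_nonneg
    rw [P1, hγh, hγh, hγz, hγz, dist_self, Real.dist_eq, sq_abs, ← sub_smul, norm_smul,
      Real.norm_eq_abs, mul_pow, sq_abs, hv1, one_pow, mul_one]
    ring
  · -- image of the line is ℝ × {z₀}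
    ext y
    constructor
    · rintro ⟨q', ⟨t, rfl⟩, rfl⟩
      rw [hΦγ]
      exact ⟨Set.mem_univ _, rfl⟩
    · intro hy
      refine ⟨γ y.1, ⟨y.1, rfl⟩, ?_⟩
      rw [hΦγ]
      have hyz : y.2 = z₀ := hy.2
      exact Prod.ext rfl hyz.symm
  · exact ⟨0, by rw [hγ]; simp only [zero_smul, P6]⟩
  · refine ⟨‖h p‖, ?_⟩
    refine P8 (γ ‖h p‖) p ?_ (by rw [hγz, hzp])
    rw [hγh, hv, smul_smul, mul_inv_cancel₀ hnorm, one_smul]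

/-- a maximal Hilbert factor subset through `x` is the union of all
splitting lines through `x`, together with `x` itself. -/
theorem maximal_hilbert_factor_eq_union_of_splitting_lines {X : Type}
    [MetricSpace X] [CompleteSpace X] (x : X) (Hx : Set X)
    (hfac : IsFactorSubset Hx x) (hHilb : IsHilbertSubset Hx)
    (hmax : ∀ B : Set X, IsFactorSubset B x → IsHilbertSubset B → Hx ⊆ B → B = Hx) :
    Hx = insert x (⋃₀ {ℓ : Set X | IsSplittingLine ℓ ∧ x ∈ ℓ}) := by
  ext q
  simp only [Set.mem_insert_iff, Set.mem_sUnion, Set.mem_setOf_eq]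
  constructor
  · intro hq
    by_cases hqx : q = x
    · exact Or.inl hqx
    · obtain ⟨H, i1, i2, i3, Z, i4, h, z, τ, P1, P2, P3, P4, P6, P5, P7, P8, P9⟩ :=
        factor_pack hfac hHilb
      obtain ⟨ℓ, hsl, hxl, hql⟩ := mem_splitting_line_core h z τ P1 P2 P3 P6 P5 P7 P8 P9 hq hqx
      exact Or.inr ⟨ℓ, ⟨hsl, hxl⟩, hql⟩
  · rintro (rfl | ⟨ℓ, ⟨hsl, hxl⟩, hql⟩)
    · exact hfac.1
    · obtain ⟨H, i1, i2, i3, Z, i4, h, z, τ, P1, P2, P3, P4, P6, P5, P7, P8, P9⟩ :=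
        factor_pack hfac hHilb
      obtain ⟨W, i5, β, w, σ, Q1, Q2, Q3, Q4, Q6, Q5, Qline⟩ := line_pack hsl hxl
      exact line_subset_core h z τ β w σ P1 P2 P3 P4 P6 P5 P7 P8
        Q1 Q2 Q3 Q4 Q6 Q5 Qline hmax hql
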